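/- In a weighted complete bipartite graph K_{n,n}, let M_k and M_{k+d} be maximum-weight matchings of cardinalities k and k+d with d ≥ 1. Decompose M_k △ M_{k+d} into vertex-disjoint alternating components. Then for every even alternating path (or cycle) component p, w(p ∩ M_k) = w(p ∩ M_{k+d}); and if p_3 is an augmenting path of M_{k+d} with respect to M_k and p_4 is an augmenting path of M_k with respect to M_{k+d}, then w((p_3 ∪ p_4) ∩ M_k) = w((p_3 ∪ p_4) ∩ M_{k+d}). -/

import Mathlib

attribute [local instance] Classical.propDecidable

def IsMatching (n : ℕ) (M : Finset (Fin n × Fin n)) : Prop :=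
  ∀ e ∈ M, ∀ f ∈ M, e ≠ f → e.1 ≠ f.1 ∧ e.2 ≠ f.2

noncomputable def wSum (n : ℕ) (w : Fin n → Fin n → ℝ) (S : Finset (Fin n × Fin n)) : ℝ :=
  ∑ e ∈ S, w e.1 e.2

/-- The bipartite graph on the vertices of `K_{n,n}` whose edges are the pairs in `D`. -/
def edgeGraph (n : ℕ) (D : Finset (Fin n × Fin n)) : SimpleGraph (Fin n ⊕ Fin n) where
  Adj x y := ∃ e ∈ D, (x = Sum.inl e.1 ∧ y = Sum.inr e.2) ∨ (x = Sum.inr e.2 ∧ y = Sum.inl e.1)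
  symm := by
    constructor
    rintro x y ⟨e, he, h | h⟩
    · exact ⟨e, he, Or.inr ⟨h.2, h.1⟩⟩
    · exact ⟨e, he, Or.inl ⟨h.2, h.1⟩⟩
  loopless := by constructor; rintro x ⟨e, he, ⟨h1, h2⟩ | ⟨h1, h2⟩⟩ <;> simp_all

/-- The connected component of the symmetric-difference graph containing the edge `e`. -/
def edgeComp (n : ℕ) (D : Finset (Fin n × Fin n)) (e : Fin n × Fin n) :
    (edgeGraph n D).ConnectedComponent :=
  (edgeGraph n D).connectedComponentMk (Sum.inl e.1)

/-- The number of edges of `S` lying in the component `c`. -/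
noncomputable def nIn (n : ℕ) (D S : Finset (Fin n × Fin n))
    (c : (edgeGraph n D).ConnectedComponent) : ℕ :=
  {e : Fin n × Fin n | e ∈ S ∧ edgeComp n D e = c}.ncard

/-- The total weight of the edges of `S` lying in the component `c`. -/
noncomputable def wIn (n : ℕ) (w : Fin n → Fin n → ℝ) (D S : Finset (Fin n × Fin n))
    (c : (edgeGraph n D).ConnectedComponent) : ℝ :=
  ∑ e ∈ S.filter (fun e => edgeComp n D e = c), w e.1 e.2

section Aux

open Finset

variable {n : ℕ}

lemma comp_inr {D : Finset (Fin n × Fin n)} {e : Fin n × Fin n} (he : e ∈ D) :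
    (edgeGraph n D).connectedComponentMk (Sum.inr e.2) = edgeComp n D e :=
  (SimpleGraph.ConnectedComponent.connectedComponentMk_eq_of_adj
    (G := edgeGraph n D) (⟨e, he, Or.inl ⟨rfl, rfl⟩⟩ : (edgeGraph n D).Adj (Sum.inl e.1) (Sum.inr e.2))).symm

lemma comp_share {D : Finset (Fin n × Fin n)} {e f : Fin n × Fin n} (he : e ∈ D) (hf : f ∈ D)
    (h : e.1 = f.1 ∨ e.2 = f.2) : edgeComp n D e = edgeComp n D f := by
  rcases h with h | h
  · unfold edgeComp; rw [h]
  · rw [← comp_inr he, ← comp_inr hf, h]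

lemma cross_aux {M M' D : Finset (Fin n × Fin n)} (hM' : IsMatching n M')
    (hD : ∀ e, e ∈ D ↔ (e ∈ M ∧ e ∉ M') ∨ (e ∈ M' ∧ e ∉ M))
    (P : (edgeGraph n D).ConnectedComponent → Prop) {e f : Fin n × Fin n}
    (heM : e ∈ M) (heA : ¬(e ∉ M' ∧ P (edgeComp n D e)))
    (hfM' : f ∈ M') (hfM : f ∉ M) (hfP : P (edgeComp n D f)) :
    e.1 ≠ f.1 ∧ e.2 ≠ f.2 := by
  have hef : e ≠ f := fun h => hfM (h ▸ heM)
  by_cases heM' : e ∈ M'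
  · exact hM' e heM' f hfM' hef
  · have key : ¬(e.1 = f.1 ∨ e.2 = f.2) := by
      intro h
      have heD : e ∈ D := (hD e).2 (Or.inl ⟨heM, heM'⟩)
      have hfD : f ∈ D := (hD f).2 (Or.inr ⟨hfM', hfM⟩)
      exact heA ⟨heM', by rw [comp_share heD hfD h]; exact hfP⟩
    exact ⟨fun h => key (Or.inl h), fun h => key (Or.inr h)⟩

lemma swap_isMatching {M M' D : Finset (Fin n × Fin n)}
    (hM : IsMatching n M) (hM' : IsMatching n M')
    (hD : ∀ e, e ∈ D ↔ (e ∈ M ∧ e ∉ M') ∨ (e ∈ M' ∧ e ∉ M))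
    (P : (edgeGraph n D).ConnectedComponent → Prop) :
    IsMatching n ((M \ ((M \ M').filter fun e => P (edgeComp n D e))) ∪
      ((M' \ M).filter fun e => P (edgeComp n D e))) := by
  intro e he f hf hef
  simp only [Finset.mem_union, Finset.mem_sdiff, Finset.mem_filter] at he hf
  have norm : ∀ g : Fin n × Fin n,
      (g ∈ M ∧ ¬((g ∈ M ∧ g ∉ M') ∧ P (edgeComp n D g))) ∨ ((g ∈ M' ∧ g ∉ M) ∧ P (edgeComp n D g)) →
      (g ∈ M ∧ ¬(g ∉ M' ∧ P (edgeComp n D g))) ∨ (g ∈ M' ∧ g ∉ M ∧ P (edgeComp n D g)) := by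
    tauto
  rcases norm e he with ⟨heM, heA⟩ | ⟨heM', heM, heP⟩ <;>
    rcases norm f hf with ⟨hfM, hfA⟩ | ⟨hfM', hfM, hfP⟩
  · exact hM e heM f hfM hef
  · exact cross_aux hM' hD P heM heA hfM' hfM hfP
  · have := cross_aux hM' hD P hfM hfA heM' heM heP
    exact ⟨fun h => this.1 h.symm, fun h => this.2 h.symm⟩
  · exact hM' e heM' f hfM' hef

lemma swap_le {M M' D : Finset (Fin n × Fin n)} (w : Fin n → Fin n → ℝ)
    (hM : IsMatching n M) (hM' : IsMatching n M')
    (hD : ∀ e, e ∈ D ↔ (e ∈ M ∧ e ∉ M') ∨ (e ∈ M' ∧ e ∉ M))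
    (P : (edgeGraph n D).ConnectedComponent → Prop)
    (hopt : ∀ N, IsMatching n N → N.card = M.card → wSum n w N ≤ wSum n w M)
    (hcard : ((M' \ M).filter fun e => P (edgeComp n D e)).card =
      ((M \ M').filter fun e => P (edgeComp n D e)).card) :
    ∑ e ∈ (M' \ M).filter (fun e => P (edgeComp n D e)), w e.1 e.2 ≤
      ∑ e ∈ (M \ M').filter (fun e => P (edgeComp n D e)), w e.1 e.2 := by
  set A := (M \ M').filter fun e => P (edgeComp n D e) with hA
  set B := (M' \ M).filter fun e => P (edgeComp n D e) with hB
  have hAM : A ⊆ M := (Finset.filter_subset _ _).trans Finset.sdiff_subset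
  have hdisj : Disjoint (M \ A) B := Finset.disjoint_left.2 fun e he hb =>
    (Finset.mem_sdiff.1 (Finset.mem_filter.1 hb).1).2 (Finset.mem_sdiff.1 he).1
  have hAcard : A.card ≤ M.card := Finset.card_le_card hAM
  have hcardN : ((M \ A) ∪ B).card = M.card := by
    rw [Finset.card_union_of_disjoint hdisj, Finset.card_sdiff_of_subset hAM, hcard]
    omega
  have hle := hopt _ (swap_isMatching hM hM' hD P) hcardN
  have heq : wSum n w ((M \ A) ∪ B) =
      wSum n w M - (∑ e ∈ A, w e.1 e.2) + ∑ e ∈ B, w e.1 e.2 := by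
    unfold wSum
    rw [Finset.sum_union hdisj, Finset.sum_sdiff_eq_sub hAM]
  rw [heq] at hle
  linarith

lemma diff_le {M M' D : Finset (Fin n × Fin n)} (hM' : IsMatching n M')
    (hD : ∀ e, e ∈ D ↔ (e ∈ M ∧ e ∉ M') ∨ (e ∈ M' ∧ e ∉ M))
    (c : (edgeGraph n D).ConnectedComponent) :
    ((M' \ M).filter fun e => edgeComp n D e = c).card ≤
      ((M \ M').filter fun e => edgeComp n D e = c).card + 1 := by
  classical
  rcases ((M' \ M).filter fun e => edgeComp n D e = c).eq_empty_or_nonempty with hBe | hBne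
  · rw [hBe]; simp
  set A := (M \ M').filter fun e => edgeComp n D e = c with hA
  set B := (M' \ M).filter fun e => edgeComp n D e = c with hB
  obtain ⟨e₀, he₀⟩ := hBne
  set Dc := D.filter fun e => edgeComp n D e = c with hDc
  have hDcAB : Dc = A ∪ B := by
    ext e
    simp only [hDc, hA, hB, Finset.mem_filter, Finset.mem_union, Finset.mem_sdiff, hD e]
    tauto
  have hdisjAB : Disjoint A B := Finset.disjoint_left.2 fun e he hb => by
    simp only [hA, hB, Finset.mem_filter, Finset.mem_sdiff] at he hb
    exact hb.1.2 he.1.1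
  have hDcCard : Dc.card = A.card + B.card := by
    rw [hDcAB, Finset.card_union_of_disjoint hdisjAB]
  set L := Dc.image Prod.fst with hL
  set R := Dc.image Prod.snd with hR
  set Vc : Finset (Fin n ⊕ Fin n) := L.image Sum.inl ∪ R.image Sum.inr with hVc
  have hBDc : B ⊆ Dc := by rw [hDcAB]; exact Finset.subset_union_right
  have hBL : B.card ≤ L.card := by
    have h1 : (B.image Prod.fst).card = B.card := by
      apply Finset.card_image_of_injOn
      intro e he f hf hfst
      by_contra hne
      exact (hM' e (Finset.mem_sdiff.1 (Finset.mem_filter.1 he).1).1 f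
        (Finset.mem_sdiff.1 (Finset.mem_filter.1 hf).1).1 hne).1 hfst
    rw [← h1]
    exact Finset.card_le_card (Finset.image_subset_image hBDc)
  have hBR : B.card ≤ R.card := by
    have h1 : (B.image Prod.snd).card = B.card := by
      apply Finset.card_image_of_injOn
      intro e he f hf hsnd
      by_contra hne
      exact (hM' e (Finset.mem_sdiff.1 (Finset.mem_filter.1 he).1).1 f
        (Finset.mem_sdiff.1 (Finset.mem_filter.1 hf).1).1 hne).2 hsnd
    rw [← h1]
    exact Finset.card_le_card (Finset.image_subset_image hBDc)
  have hVcCard : Vc.card = L.card + R.card := by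
    rw [hVc, Finset.card_union_of_disjoint, Finset.card_image_of_injective _ Sum.inl_injective,
      Finset.card_image_of_injective _ Sum.inr_injective]
    simp only [Finset.disjoint_left, Finset.mem_image]
    rintro x ⟨a, -, rfl⟩ ⟨b, -, h⟩
    exact Sum.inl_ne_inr h.symm
  have he₀Dc : e₀ ∈ Dc := hBDc he₀
  set r : Fin n ⊕ Fin n := Sum.inl e₀.1 with hr
  have hrV : r ∈ Vc := by
    rw [hVc]
    exact Finset.mem_union_left _ (Finset.mem_image_of_mem _
      (Finset.mem_image_of_mem _ he₀Dc))
  have hcomp : ∀ v ∈ Vc, (edgeGraph n D).connectedComponentMk v = c := by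
    intro v hv
    rw [hVc, Finset.mem_union] at hv
    rcases hv with hv | hv
    · obtain ⟨x, hx, rfl⟩ := Finset.mem_image.1 hv
      obtain ⟨e, he, rfl⟩ := Finset.mem_image.1 hx
      exact (Finset.mem_filter.1 he).2
    · obtain ⟨x, hx, rfl⟩ := Finset.mem_image.1 hv
      obtain ⟨e, he, rfl⟩ := Finset.mem_image.1 hx
      rw [comp_inr (Finset.mem_filter.1 he).1]
      exact (Finset.mem_filter.1 he).2
  have key : ∀ v ∈ Vc.erase r, ∃ e ∈ Dc,
      (v = Sum.inl e.1 ∧ (edgeGraph n D).dist (Sum.inr e.2) r < (edgeGraph n D).dist v r) ∨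
      (v = Sum.inr e.2 ∧ (edgeGraph n D).dist (Sum.inl e.1) r < (edgeGraph n D).dist v r) := by
    intro v hv
    obtain ⟨hne, hvV⟩ := Finset.mem_erase.1 hv
    have hreach : (edgeGraph n D).Reachable v r :=
      SimpleGraph.ConnectedComponent.exact ((hcomp v hvV).trans (hcomp r hrV).symm)
    obtain ⟨p, hp⟩ := hreach.exists_walk_length_eq_dist
    cases p with
    | nil => exact absurd rfl hne
    | @cons _ u _ h q =>
        obtain ⟨e, heD, hcase⟩ := h
        have hqd : (edgeGraph n D).dist u r ≤ q.length := SimpleGraph.dist_le q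
        have hlen : q.length + 1 = (edgeGraph n D).dist v r := by
          exact hp
        have hcompu : (edgeGraph n D).connectedComponentMk u = c := by
          have : (edgeGraph n D).connectedComponentMk v = (edgeGraph n D).connectedComponentMk u :=
            SimpleGraph.ConnectedComponent.connectedComponentMk_eq_of_adj ⟨e, heD, hcase⟩
          rw [← this]; exact hcomp v hvV
        have heDc : e ∈ Dc := by
          refine Finset.mem_filter.2 ⟨heD, ?_⟩
          rcases hcase with ⟨h1, h2⟩ | ⟨h1, h2⟩
          · rw [show edgeComp n D e = (edgeGraph n D).connectedComponentMk v by rw [h1]; rfl]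
            exact hcomp v hvV
          · rw [show edgeComp n D e = (edgeGraph n D).connectedComponentMk u by rw [h2]; rfl]
            exact hcompu
        refine ⟨e, heDc, ?_⟩
        rcases hcase with ⟨h1, h2⟩ | ⟨h1, h2⟩
        · exact Or.inl ⟨h1, by rw [← h2]; omega⟩
        · exact Or.inr ⟨h1, by rw [← h2]; omega⟩
  have key' : ∀ v : Fin n ⊕ Fin n, ∃ e : Fin n × Fin n, v ∈ Vc.erase r →
      e ∈ Dc ∧ ((v = Sum.inl e.1 ∧ (edgeGraph n D).dist (Sum.inr e.2) r < (edgeGraph n D).dist v r) ∨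
      (v = Sum.inr e.2 ∧ (edgeGraph n D).dist (Sum.inl e.1) r < (edgeGraph n D).dist v r)) := by
    intro v
    by_cases hv : v ∈ Vc.erase r
    · obtain ⟨e, he, hQ⟩ := key v hv
      exact ⟨e, fun _ => ⟨he, hQ⟩⟩
    · exact ⟨e₀, fun h => absurd h hv⟩
  choose f hf using key'
  have hinj : (Vc.erase r).card ≤ Dc.card := by
    apply Finset.card_le_card_of_injOn f (fun v hv => (hf v hv).1)
    intro v hv v' hv' heq
    obtain ⟨-, hQv⟩ := hf v hv
    obtain ⟨-, hQv'⟩ := hf v' hv'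
    rw [heq] at hQv
    by_contra hne
    rcases hQv with ⟨h1, h2⟩ | ⟨h1, h2⟩ <;> rcases hQv' with ⟨h1', h2'⟩ | ⟨h1', h2'⟩
    · exact hne (h1.trans h1'.symm)
    · rw [← h1'] at h2; rw [← h1] at h2'; omega
    · rw [← h1'] at h2; rw [← h1] at h2'; omega
    · exact hne (h1.trans h1'.symm)
  have herase : (Vc.erase r).card = Vc.card - 1 := Finset.card_erase_of_mem hrV
  have hVpos : 1 ≤ Vc.card := Finset.card_pos.2 ⟨r, hrV⟩
  omega

end Aux

/-- for maximum-weight matchings `M` (card k) and `M'` (card k + d) in a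
weighted `K_{n,n}`, every even alternating component of M △ M' has equal `M`- and
`M'`-weight, and any pair of one `M'`-augmenting and one `M`-augmenting component has equal
total `M`- and `M'`-weight. -/
theorem stmt11 (n k d : ℕ) (hd : 1 ≤ d) (w : Fin n → Fin n → ℝ)
    (M M' : Finset (Fin n × Fin n))
    (hM : IsMatching n M) (hck : M.card = k)
    (hopt : ∀ N, IsMatching n N → N.card = k → wSum n w N ≤ wSum n w M)
    (hM' : IsMatching n M') (hck' : M'.card = k + d)
    (hopt' : ∀ N, IsMatching n N → N.card = k + d → wSum n w N ≤ wSum n w M') :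
    (∀ c : (edgeGraph n (symmDiff M M')).ConnectedComponent,
      nIn n (symmDiff M M') (M' \ M) c = nIn n (symmDiff M M') (M \ M') c →
      wIn n w (symmDiff M M') (M \ M') c = wIn n w (symmDiff M M') (M' \ M) c) ∧
    (∀ c₃ c₄ : (edgeGraph n (symmDiff M M')).ConnectedComponent,
      nIn n (symmDiff M M') (M \ M') c₃ < nIn n (symmDiff M M') (M' \ M) c₃ →
      nIn n (symmDiff M M') (M' \ M) c₄ < nIn n (symmDiff M M') (M \ M') c₄ →
      wIn n w (symmDiff M M') (M \ M') c₃ + wIn n w (symmDiff M M') (M \ M') c₄ =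
      wIn n w (symmDiff M M') (M' \ M) c₃ + wIn n w (symmDiff M M') (M' \ M) c₄) := by
  classical
  set D := symmDiff M M' with hDdef
  have hD : ∀ e, e ∈ D ↔ (e ∈ M ∧ e ∉ M') ∨ (e ∈ M' ∧ e ∉ M) := by
    intro e; rw [hDdef, Finset.mem_symmDiff]
  have hD' : ∀ e, e ∈ D ↔ (e ∈ M' ∧ e ∉ M) ∨ (e ∈ M ∧ e ∉ M') := by
    intro e; rw [hD e]; tauto
  have hnIn : ∀ (S : Finset (Fin n × Fin n)) c, nIn n D S c =
      (S.filter fun e => edgeComp n D e = c).card := by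
    intro S c
    rw [nIn, ← Set.ncard_coe_finset]
    congr 1
    ext e
    simp
  have hoptM : ∀ N, IsMatching n N → N.card = M.card → wSum n w N ≤ wSum n w M :=
    fun N h1 h2 => hopt N h1 (by omega)
  have hoptM' : ∀ N, IsMatching n N → N.card = M'.card → wSum n w N ≤ wSum n w M' :=
    fun N h1 h2 => hopt' N h1 (by omega)
  constructor
  · intro c hc
    rw [hnIn, hnIn] at hc
    have h1 := swap_le w hM hM' hD (fun x => x = c) hoptM hc
    have h2 := swap_le w hM' hM hD' (fun x => x = c) hoptM' hc.symm
    have h1' : wIn n w D (M' \ M) c ≤ wIn n w D (M \ M') c := h1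
    have h2' : wIn n w D (M \ M') c ≤ wIn n w D (M' \ M) c := h2
    exact le_antisymm h2' h1'
  · intro c₃ c₄ h₃ h₄
    rw [hnIn, hnIn] at h₃ h₄
    have hb₃ := diff_le hM' hD c₃
    have ha₄ := diff_le hM hD' c₄
    have hne : c₃ ≠ c₄ := by
      intro h; rw [h] at h₃; omega
    obtain ⟨P, hPdef⟩ : ∃ P : (edgeGraph n D).ConnectedComponent → Prop,
        ∀ x, P x ↔ (x = c₃ ∨ x = c₄) := ⟨fun x => x = c₃ ∨ x = c₄, fun x => Iff.rfl⟩
    have hsplitc : ∀ S : Finset (Fin n × Fin n),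
        S.filter (fun e => P (edgeComp n D e)) =
          S.filter (fun e => edgeComp n D e = c₃) ∪ S.filter (fun e => edgeComp n D e = c₄) := by
      intro S
      ext e
      simp only [Finset.mem_filter, Finset.mem_union, hPdef]
      tauto
    have hdisjc : ∀ S : Finset (Fin n × Fin n),
        Disjoint (S.filter (fun e => edgeComp n D e = c₃))
          (S.filter (fun e => edgeComp n D e = c₄)) := by
      intro S
      refine Finset.disjoint_left.2 fun e he1 he2 => ?_
      exact hne ((Finset.mem_filter.1 he1).2.symm.trans (Finset.mem_filter.1 he2).2)
    have hcardP : ((M' \ M).filter fun e => P (edgeComp n D e)).card =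
        ((M \ M').filter fun e => P (edgeComp n D e)).card := by
      rw [hsplitc, hsplitc, Finset.card_union_of_disjoint (hdisjc _),
        Finset.card_union_of_disjoint (hdisjc _)]
      omega
    have h1 := swap_le w hM hM' hD P hoptM hcardP
    have h2 := swap_le w hM' hM hD' P hoptM' hcardP.symm
    rw [hsplitc, hsplitc, Finset.sum_union (hdisjc _), Finset.sum_union (hdisjc _)] at h1 h2
    have h1' : wIn n w D (M' \ M) c₃ + wIn n w D (M' \ M) c₄ ≤
        wIn n w D (M \ M') c₃ + wIn n w D (M \ M') c₄ := h1
    have h2' : wIn n w D (M \ M') c₃ + wIn n w D (M \ M') c₄ ≤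
        wIn n w D (M' \ M) c₃ + wIn n w D (M' \ M) c₄ := h2
    linarith
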